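/- arXiv:0711.1853 — 6 statements merged into one kernel-verified Lean document; each statement's English description precedes it below -/
import Mathlib

section
/- The ordinal pattern ⟨0,2,3,1⟩ is forbidden for the shift map S₂(x) = 2x mod 1 on [0,1); that is, there is no x ∈ [0,1) with x < S₂²(x) < S₂³(x) < S₂(x). -/
/-- The shift (sawtooth) map `S₂(x) = 2x mod 1`. -/
noncomputable def S2 (x : ℝ) : ℝ := Int.fract (2 * x)

lemma S2_nonneg (x : ℝ) : 0 ≤ S2 x := Int.fract_nonneg _

lemma S2_lt_one (x : ℝ) : S2 x < 1 := Int.fract_lt_one _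

lemma S2_lo {x : ℝ} (h0 : 0 ≤ x) (h : x < 1/2) : S2 x = 2 * x := by
  unfold S2
  exact Int.fract_eq_self.mpr ⟨by linarith, by linarith⟩

lemma S2_hi {x : ℝ} (h : 1/2 ≤ x) (h1 : x < 1) : S2 x = 2 * x - 1 := by
  unfold S2
  have : Int.fract (2 * x) = Int.fract (2 * x - (1 : ℤ)) := (Int.fract_sub_intCast _ _).symm
  rw [this]
  push_cast
  exact Int.fract_eq_self.mpr ⟨by linarith, by linarith⟩

lemma S2_cases {x : ℝ} (h0 : 0 ≤ x) (h1 : x < 1) :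
    S2 x = 2 * x ∨ S2 x = 2 * x - 1 := by
  rcases lt_or_ge x (1/2) with h | h
  · exact Or.inl (S2_lo h0 h)
  · exact Or.inr (S2_hi h h1)

/-- The ordinal pattern `⟨0,2,3,1⟩` is forbidden for the shift map `S₂`. -/
theorem pattern_0231_forbidden :
    ¬ ∃ x ∈ Set.Ico (0 : ℝ) 1,
      x < S2^[2] x ∧ S2^[2] x < S2^[3] x ∧ S2^[3] x < S2 x := by
  rintro ⟨x, ⟨hx0, hx1⟩, h02, h23, h31⟩
  have e2 : S2^[2] x = S2 (S2 x) := by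
    simp [Function.iterate_succ_apply]
  have e3 : S2^[3] x = S2 (S2 (S2 x)) := by
    simp [Function.iterate_succ_apply]
  rw [e2] at h02
  rw [e2, e3] at h23
  rw [e3] at h31
  have b1a := S2_nonneg x
  have b1b := S2_lt_one x
  have b2a := S2_nonneg (S2 x)
  have b2b := S2_lt_one (S2 x)
  have b3a := S2_nonneg (S2 (S2 x))
  have b3b := S2_lt_one (S2 (S2 x))
  rcases S2_cases hx0 hx1 with d1 | d1 <;>
    rcases S2_cases b1a b1b with d2 | d2 <;>
      rcases S2_cases b2a b2b with d3 | d3 <;>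
        linarith
end

section
/- The ordinal pattern ⟨2,0,1,3⟩ is forbidden for the shift map S₂(x) = 2x mod 1 on [0,1); that is, there is no x ∈ [0,1) with S₂²(x) < x < S₂(x) < S₂³(x). -/
lemma fract_lo (y : ℝ) (h0 : 0 ≤ y) (h1 : y < 1) : Int.fract y = y :=
  Int.fract_eq_self.2 ⟨h0, h1⟩

lemma fract_hi (y : ℝ) (h0 : 1 ≤ y) (h1 : y < 2) : Int.fract y = y - 1 := by
  have := Int.fract_sub_intCast y 1
  rw [← this]
  push_cast
  exact Int.fract_eq_self.2 ⟨by linarith, by linarith⟩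

/-- The ordinal pattern `⟨2,0,1,3⟩` is forbidden for the shift map `S₂`. -/
theorem pattern_2013_forbidden :
    ¬ ∃ x ∈ Set.Ico (0 : ℝ) 1,
      S2^[2] x < x ∧ x < S2 x ∧ S2 x < S2^[3] x := by
  rintro ⟨x, ⟨hx0, hx1⟩, h2, h1, h3⟩
  have e2 : S2^[2] x = S2 (S2 x) := rfl
  have e3 : S2^[3] x = S2 (S2 (S2 x)) := rfl
  rw [e2] at h2
  rw [e3] at h3
  -- x < 1/2
  have hhalf : x < 1/2 := by
    by_contra h
    push_neg at h
    have : S2 x = 2 * x - 1 := by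
      unfold S2; exact fract_hi _ (by linarith) (by linarith)
    rw [this] at h1; linarith
  have eS : S2 x = 2 * x := by
    unfold S2; exact fract_lo _ (by linarith) (by linarith)
  rw [eS] at h1 h2 h3
  -- 4x ≥ 1
  have hq : (1:ℝ) ≤ 4 * x := by
    by_contra h
    push_neg at h
    have : S2 (2 * x) = 4 * x := by
      unfold S2
      rw [show 2 * (2 * x) = 4 * x by ring]
      exact fract_lo _ (by linarith) (by linarith)
    rw [this] at h2; linarith
  have eS2 : S2 (2 * x) = 4 * x - 1 := by
    unfold S2
    rw [show 2 * (2 * x) = 4 * x by ring]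
    exact fract_hi _ hq (by linarith)
  rw [eS2] at h2 h3
  -- so x < 1/3
  have eS3 : S2 (4 * x - 1) = 8 * x - 2 := by
    unfold S2
    rw [show 2 * (4 * x - 1) = 8 * x - 2 by ring]
    exact fract_lo _ (by linarith) (by linarith)
  rw [eS3] at h3
  linarith
end

section
/- The ordinal pattern ⟨2,1,0⟩ is forbidden for the logistic map f(x) = 4x(1-x) on [0,1]; that is, there is no x ∈ [0,1] with f²(x) < f(x) < x. -/
/-- The logistic map `f(x) = 4x(1-x)`. -/
def logistic (x : ℝ) : ℝ := 4 * x * (1 - x)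

/-- The ordinal pattern `⟨2,1,0⟩` is forbidden for the logistic map on `[0,1]`:
no `x` satisfies `f²(x) < f(x) < x`. -/
theorem logistic_pattern_210_forbidden :
    ¬ ∃ x ∈ Set.Icc (0 : ℝ) 1,
      logistic (logistic x) < logistic x ∧ logistic x < x := by
  rintro ⟨x, ⟨hx0, hx1⟩, h2, h1⟩
  simp only [logistic] at h1 h2
  -- from h1 and x ≥ 0: x > 3/4
  have hx : x > 3/4 := by nlinarith
  -- then f x < 3/4 and f x ≥ 0
  have hy1 : 4 * x * (1 - x) < 3/4 := by nlinarith
  have hy0 : 0 ≤ 4 * x * (1 - x) := by nlinarith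
  nlinarith [sq_nonneg (4 * x * (1 - x))]
end

section
/- If π = ⟨π₀,...,π_{L-1}⟩ is a forbidden ordinal pattern of length L for a map f on a linearly ordered set X, then the mirrored pattern reflected through order reversal is forbidden for f on X with the reversed order; more concretely, for the one-sided shift Σ on binary sequences, if π is forbidden for Σ then its mirrored pattern ⟨π_{L-1},π_{L-2},...,π₁,π₀⟩ is also forbidden for Σ. -/
/-- Lexicographic (strict) order on one-sided binary sequences. -/
def lexLt (a b : ℕ → Bool) : Prop := ∃ n, (∀ i < n, a i = b i) ∧ a n < b n

/-- The one-sided shift on binary sequences. -/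
def shift (a : ℕ → Bool) : ℕ → Bool := fun n => a (n + 1)

/-- Bitwise complement of a binary sequence. -/
def comp' (a : ℕ → Bool) : ℕ → Bool := fun n => !(a n)

lemma shift_comp (a : ℕ → Bool) : shift (comp' a) = comp' (shift a) := rfl

lemma shift_iter_comp (k : ℕ) (a : ℕ → Bool) :
    shift^[k] (comp' a) = comp' (shift^[k] a) := by
  induction k generalizing a with
  | zero => rfl
  | succ k ih =>
    rw [Function.iterate_succ_apply, Function.iterate_succ_apply, shift_comp, ih]

lemma lexLt_comp {a b : ℕ → Bool} (h : lexLt b a) : lexLt (comp' a) (comp' b) := by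
  obtain ⟨n, h1, h2⟩ := h
  refine ⟨n, fun i hi => by rw [comp', comp', h1 i hi], ?_⟩
  rw [Bool.lt_iff] at h2 ⊢
  simp [comp', h2.1, h2.2]

/-- If `π` is a forbidden pattern for the one-sided binary shift, then so is
its mirrored pattern `⟨π_{L-1}, ..., π₁, π₀⟩`. -/
theorem mirrored_pattern_forbidden (L : ℕ) (π : Equiv.Perm (Fin L))
    (hforb : ¬ ∃ α : ℕ → Bool, ∀ i j : Fin L, i < j →
      lexLt (shift^[(π i : ℕ)] α) (shift^[(π j : ℕ)] α)) :
    ¬ ∃ α : ℕ → Bool, ∀ i j : Fin L, i < j →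
      lexLt (shift^[(π (Fin.rev i) : ℕ)] α) (shift^[(π (Fin.rev j) : ℕ)] α) := by
  rintro ⟨α, hα⟩
  apply hforb
  refine ⟨comp' α, fun i j hij => ?_⟩
  rw [shift_iter_comp, shift_iter_comp]
  apply lexLt_comp
  have := hα j.rev i.rev (by simpa using Fin.rev_lt_rev.mpr hij)
  simpa using this
end

section
/- For the one-sided shift Σ on two symbols {0,1}, the ordinal pattern ⟨0,2,3,1⟩ of length 4 = |A| + 2 is forbidden: no binary sequence α satisfies α ≺ Σ²(α) ≺ Σ³(α) ≺ Σ(α) in lexicographic order. -/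
/-- For the one-sided binary shift, the pattern `⟨0,2,3,1⟩` (of length
`|A| + 2 = 4`) is forbidden. -/
theorem shift_pattern_0231_forbidden :
    ¬ ∃ α : ℕ → Bool,
      lexLt α (shift^[2] α) ∧ lexLt (shift^[2] α) (shift^[3] α) ∧
        lexLt (shift^[3] α) (shift α) := by
  rintro ⟨α, ⟨q, hq1, hq2⟩, ⟨m, hm1, hm2⟩, ⟨p, hp1, hp2⟩⟩
  have e1 : ∀ n, (shift α) n = α (n + 1) := fun n => rfl
  have e2 : ∀ n, (shift^[2] α) n = α (n + 2) := fun n => rfl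
  have e3 : ∀ n, (shift^[3] α) n = α (n + 3) := fun n => rfl
  simp only [e1, e2, e3, Bool.lt_iff] at hq1 hq2 hm1 hm2 hp1 hp2
  -- hq1 : ∀ i < q, α i = α (i+2); hq2 : α q = false ∧ α (q+2) = true
  -- hm1 : ∀ i < m, α (i+2) = α (i+3); hm2 : α (m+2) = false ∧ α (m+3) = true
  -- hp1 : ∀ i < p, α (i+3) = α (i+1); hp2 : α (p+3) = false ∧ α (p+1) = true
  rcases lt_trichotomy q (p + 1) with h | h | h
  · rcases Nat.eq_zero_or_pos q with hq0 | hqpos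
    · -- q = 0 : α 2 = true from hq2, but α 2 = false from the m-run
      have key : ∀ i ≤ m, α (m - i + 2) = false := by
        intro i hi
        induction i with
        | zero => simpa using hm2.1
        | succ i ih =>
          have h1 : m - (i + 1) < m := Nat.sub_lt_of_pos_le (Nat.succ_pos i) hi
          have h2 : m - (i + 1) + 3 = m - i + 2 := by omega
          have := hm1 _ h1
          rw [h2] at this
          rw [this, ih (le_of_lt (Nat.lt_of_succ_le hi))]
      have h2f : α 2 = false := by
        have := key m le_rfl
        simpa using this
      have h2t : α 2 = true := by
        have := hq2.2
        rw [hq0] at this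
        simpa using this
      rw [h2f] at h2t
      exact Bool.false_ne_true h2t
    · -- 1 ≤ q ≤ p : periodicity from hp1 at q-1 contradicts hq2
      have hlt : q - 1 < p := by omega
      have := hp1 _ hlt
      have e : q - 1 + 3 = q + 2 := by omega
      have e' : q - 1 + 1 = q := by omega
      rw [e, e'] at this
      rw [hq2.2, hq2.1] at this
      simp at this
  · -- q = p + 1
    have := hp2.2
    rw [← h] at this
    rw [hq2.1] at this
    exact Bool.false_ne_true this
  · -- p + 1 < q : periodicity from hq1 at p+1 contradicts hp2
    have := hq1 _ h
    have e : p + 1 + 2 = p + 3 := by omega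
    rw [e] at this
    rw [hp2.2, hp2.1] at this
    simp at this
end

section
/- If π = ⟨π₀,...,π_{L-1}⟩ is a forbidden pattern of length L for a map f, then for every 0 ≤ j ≤ L, the length-(L+1) pattern obtained by incrementing every entry of π by 1 and inserting the symbol 0 at position j (i.e., ⟨π₀+1,...,π_{j-1}+1, 0, π_j+1,...,π_{L-1}+1⟩) is also forbidden for f. -/
/-- If `π ∈ S_L` is forbidden for `f`, then the pattern of length `L+1`
obtained by incrementing every entry of `π` by one and inserting the symbol
`0` at any position `j` is also forbidden. The new pattern `π'` is
characterized by `π' j = 0` and `π' (j.succAbove i) = π i + 1`. -/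
theorem insert_zero_shifted_forbidden
    {X : Type*} [LinearOrder X] (f : X → X) (L : ℕ)
    (π : Equiv.Perm (Fin L)) (j : Fin (L + 1)) (π' : Equiv.Perm (Fin (L + 1)))
    (hj : π' j = 0)
    (hins : ∀ i : Fin L, π' (j.succAbove i) = (π i).succ)
    (hforb : ¬ ∃ x : X, ∀ i k : Fin L, i < k →
      f^[(π i : ℕ)] x < f^[(π k : ℕ)] x) :
    ¬ ∃ x : X, ∀ i k : Fin (L + 1), i < k →
      f^[(π' i : ℕ)] x < f^[(π' k : ℕ)] x := by
  rintro ⟨x, hx⟩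
  apply hforb
  refine ⟨f x, fun i k hik => ?_⟩
  have h := hx (j.succAbove i) (j.succAbove k) (Fin.succAbove_lt_succAbove_iff.mpr hik)
  rw [hins, hins] at h
  simpa [Fin.val_succ, Function.iterate_succ_apply] using h
end
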